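/- Let 𝔞: ℚ_p^N → ℝ_{≥0} be a continuous symbol with 𝔞(ξ) ≥ C > 0 everywhere and C₀‖ξ‖_p^α ≤ 𝔞(ξ) ≤ C₁‖ξ‖_p^α for ‖ξ‖_p ≥ p^{m₀}. Then the pseudodifferential operator A g = F⁻¹(𝔞 · F g) maps ℋ(l+1) continuously into ℋ(l) for every l ∈ ℕ, i.e. there is C₂ > 0 with ‖Ag‖_l ≤ C₂ ‖g‖_{l+1}. -/

import Mathlib

open MeasureTheory Filter
open scoped ENNReal NNReal

noncomputable section

def FT {p N : ℕ} [Fact p.Prime] [MeasurableSpace (Fin N → ℚ_[p])]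
    (μ : Measure (Fin N → ℚ_[p]))
    (B : (Fin N → ℚ_[p]) →ₗ[ℚ_[p]] (Fin N → ℚ_[p]) →ₗ[ℚ_[p]] ℚ_[p])
    (χ : AddChar ℚ_[p] ℂ) (f : (Fin N → ℚ_[p]) → ℂ) : (Fin N → ℚ_[p]) → ℂ :=
  fun ξ => ∫ x, f x * χ (B x ξ) ∂μ

def sobolevNormSq {p N : ℕ} [Fact p.Prime] [MeasurableSpace (Fin N → ℚ_[p])]
    (μ : Measure (Fin N → ℚ_[p])) (α : ℝ) (l : ℤ)
    (h : (Fin N → ℚ_[p]) → ℂ) : ℝ≥0∞ :=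
  ∫⁻ ξ, ENNReal.ofReal ((max 1 ‖ξ‖) ^ (2 * α * (l : ℝ))) * (‖h ξ‖₊ : ℝ≥0∞) ^ 2 ∂μ

def sobolevNorm {p N : ℕ} [Fact p.Prime] [MeasurableSpace (Fin N → ℚ_[p])]
    (μ : Measure (Fin N → ℚ_[p])) (α : ℝ) (l : ℤ)
    (h : (Fin N → ℚ_[p]) → ℂ) : ℝ≥0∞ :=
  (sobolevNormSq μ α l h) ^ (1 / 2 : ℝ)

def IsBruhatSchwartz {p N : ℕ} [Fact p.Prime] (f : (Fin N → ℚ_[p]) → ℂ) : Prop :=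
  (∀ x : Fin N → ℚ_[p], ∃ l : ℤ, ∀ y : Fin N → ℚ_[p], ‖y‖ ≤ (p : ℝ) ^ l → f (x + y) = f x) ∧
    HasCompactSupport f

/-- A sequence is Cauchy in the Sobolev norm `‖·‖_l`. -/
def SobolevCauchy {p N : ℕ} [Fact p.Prime] [MeasurableSpace (Fin N → ℚ_[p])]
    (μ : Measure (Fin N → ℚ_[p])) (α : ℝ) (l : ℤ)
    (F : ℕ → (Fin N → ℚ_[p]) → ℂ) : Prop :=
  ∀ ε : ℝ≥0∞, 0 < ε → ∃ K : ℕ, ∀ j k : ℕ, K ≤ j → K ≤ k →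
    sobolevNorm μ α l (F j - F k) < ε

/-- `g` belongs to the Sobolev space `ℋ(l)`, the completion of the Bruhat–Schwartz
space with respect to `‖·‖_l`, viewed inside `L²`. -/
def MemSobolev {p N : ℕ} [Fact p.Prime] [MeasurableSpace (Fin N → ℚ_[p])]
    (μ : Measure (Fin N → ℚ_[p]))
    (B : (Fin N → ℚ_[p]) →ₗ[ℚ_[p]] (Fin N → ℚ_[p]) →ₗ[ℚ_[p]] ℚ_[p])
    (χ : AddChar ℚ_[p] ℂ) (α : ℝ) (l : ℤ) (g : (Fin N → ℚ_[p]) → ℂ) : Prop :=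
  MemLp g 2 μ ∧ ∃ F : ℕ → (Fin N → ℚ_[p]) → ℂ,
    (∀ n, IsBruhatSchwartz (F n)) ∧
    Tendsto (fun n => eLpNorm (F n - g) 2 μ) atTop (nhds 0) ∧
    SobolevCauchy μ α l (fun n => FT μ B χ (F n))

/-- `h` is the (distributional) Fourier transform of `g`:
`⟨h, φ⟩ = ⟨g, Fφ⟩` for every test function `φ`. -/
def IsFTOf {p N : ℕ} [Fact p.Prime] [MeasurableSpace (Fin N → ℚ_[p])]
    (μ : Measure (Fin N → ℚ_[p]))
    (B : (Fin N → ℚ_[p]) →ₗ[ℚ_[p]] (Fin N → ℚ_[p]) →ₗ[ℚ_[p]] ℚ_[p])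
    (χ : AddChar ℚ_[p] ℂ) (g h : (Fin N → ℚ_[p]) → ℂ) : Prop :=
  ∀ φ : (Fin N → ℚ_[p]) → ℂ, IsBruhatSchwartz φ →
    ∫ x, h x * φ x ∂μ = ∫ x, g x * FT μ B χ φ x ∂μ


/-- a pseudodifferential operator `A g = F⁻¹(𝔞 · F g)` with a smooth
symbol `𝔞` maps `ℋ(l+1)` continuously into `ℋ(l)`: `‖Ag‖_l ≤ C₂ ‖g‖_{l+1}`.
(On the Fourier side, `A` is multiplication by `𝔞`, so `F(Ag) = 𝔞 · ĝ`.) -/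
theorem stmt3 {p N : ℕ} [Fact p.Prime] (hN : 1 ≤ N)
    [MeasurableSpace (Fin N → ℚ_[p])] [BorelSpace (Fin N → ℚ_[p])]
    (μ : Measure (Fin N → ℚ_[p])) [μ.IsAddHaarMeasure]
    (B : (Fin N → ℚ_[p]) →ₗ[ℚ_[p]] (Fin N → ℚ_[p]) →ₗ[ℚ_[p]] ℚ_[p])
    (hB_symm : ∀ x y, B x y = B y x)
    (hB_nondeg : ∀ x, (∀ y, B x y = 0) → x = 0)
    (χ : AddChar ℚ_[p] ℂ) (hχc : Continuous χ)
    (hχ : ∀ y : ℚ_[p], χ y = 1 ↔ ‖y‖ ≤ 1)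
    (α : ℝ) (hα : 0 < α)
    (a : (Fin N → ℚ_[p]) → ℝ) (ha_cont : Continuous a)
    (ha_nonneg : ∀ ξ, 0 ≤ a ξ)
    (C C₀ C₁ : ℝ) (hC : 0 < C) (hC₀ : 0 < C₀) (hC₁ : 0 < C₁) (m₀ : ℕ)
    (ha_low : ∀ ξ : Fin N → ℚ_[p], C ≤ a ξ)
    (ha_bound : ∀ ξ : Fin N → ℚ_[p], (p : ℝ) ^ (m₀ : ℤ) ≤ ‖ξ‖ →
      C₀ * ‖ξ‖ ^ α ≤ a ξ ∧ a ξ ≤ C₁ * ‖ξ‖ ^ α)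
    (l : ℕ) :
    ∃ C₂ : ℝ≥0∞, 0 < C₂ ∧ C₂ < ⊤ ∧
      ∀ g gh : (Fin N → ℚ_[p]) → ℂ, IsFTOf μ B χ g gh →
        sobolevNorm μ α l (fun ξ => (a ξ : ℂ) * gh ξ) ≤
          C₂ * sobolevNorm μ α (l + 1) gh := by
  -- bound `a` on a compact ball
  obtain ⟨M, hM⟩ := (isCompact_closedBall (0 : Fin N → ℚ_[p]) ((p:ℝ) ^ (m₀:ℤ))).exists_bound_of_continuousOn ha_cont.continuousOn
  set K : ℝ := max 1 (max C₁ M) with hKdef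
  have hK1 : (1:ℝ) ≤ K := le_max_left _ _
  have hK0 : (0:ℝ) ≤ K := zero_le_one.trans hK1
  have hp1 : (1:ℝ) ≤ (p:ℝ) ^ (m₀:ℤ) := one_le_zpow₀ (by exact_mod_cast (Fact.out : p.Prime).one_lt.le) (by positivity)
  -- pointwise symbol bound
  have key : ∀ ξ : Fin N → ℚ_[p], a ξ ≤ K * (max 1 ‖ξ‖) ^ α := by
    intro ξ
    by_cases h : (p:ℝ) ^ (m₀:ℤ) ≤ ‖ξ‖
    · have h1 : (1:ℝ) ≤ ‖ξ‖ := hp1.trans h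
      have hm : max 1 ‖ξ‖ = ‖ξ‖ := max_eq_right h1
      rw [hm]
      calc a ξ ≤ C₁ * ‖ξ‖ ^ α := (ha_bound ξ h).2
        _ ≤ K * ‖ξ‖ ^ α := by
            apply mul_le_mul_of_nonneg_right _ (Real.rpow_nonneg (by linarith) α)
            exact le_trans (le_max_left _ _) (le_max_right _ _)
    · have hmem : ξ ∈ Metric.closedBall (0 : Fin N → ℚ_[p]) ((p:ℝ) ^ (m₀:ℤ)) := by
        simpa [Metric.mem_closedBall, dist_zero_right] using (le_of_not_ge h)
      have h1 : a ξ ≤ M := le_trans (le_abs_self _) (hM ξ hmem)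
      calc a ξ ≤ M := h1
        _ ≤ K := le_trans (le_max_right _ _) (le_max_right _ _)
        _ = K * 1 := (mul_one _).symm
        _ ≤ K * (max 1 ‖ξ‖) ^ α := by
            apply mul_le_mul_of_nonneg_left _ hK0
            exact Real.one_le_rpow (le_max_left _ _) hα.le
  set c : ℝ≥0∞ := ENNReal.ofReal K with hcdef
  have hc0 : 0 < c := ENNReal.ofReal_pos.2 (lt_of_lt_of_le one_pos hK1)
  have hcT : c < ⊤ := ENNReal.ofReal_lt_top
  refine ⟨c, hc0, hcT, ?_⟩
  intro g gh _
  -- main integral inequality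
  have main : sobolevNormSq μ α l (fun ξ => (a ξ : ℂ) * gh ξ) ≤
      c ^ 2 * sobolevNormSq μ α (l + 1) gh := by
    unfold sobolevNormSq
    rw [← MeasureTheory.lintegral_const_mul' _ _ (ENNReal.pow_ne_top hcT.ne)]
    apply lintegral_mono
    intro ξ
    set m : ℝ := max 1 ‖ξ‖ with hmdef
    have hm1 : (1:ℝ) ≤ m := le_max_left _ _
    have hm0 : (0:ℝ) < m := lt_of_lt_of_le one_pos hm1
    have hnorm : (‖(a ξ : ℂ) * gh ξ‖₊ : ℝ≥0∞) = ENNReal.ofReal (a ξ) * (‖gh ξ‖₊ : ℝ≥0∞) := by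
      rw [nnnorm_mul]
      push_cast
      congr 1
      rw [← enorm_eq_nnnorm, ← ofReal_norm, Complex.norm_real,
        Real.norm_of_nonneg (ha_nonneg ξ)]
    have ha2 : (ENNReal.ofReal (a ξ)) ^ 2 ≤ c ^ 2 * ENNReal.ofReal (m ^ (2 * α)) := by
      have h1 : ENNReal.ofReal (a ξ) ≤ c * ENNReal.ofReal (m ^ α) := by
        rw [← ENNReal.ofReal_mul hK0]
        exact ENNReal.ofReal_le_ofReal (key ξ)
      calc (ENNReal.ofReal (a ξ)) ^ 2 ≤ (c * ENNReal.ofReal (m ^ α)) ^ 2 := by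
            exact pow_le_pow_left' h1 2
        _ = c ^ 2 * (ENNReal.ofReal (m ^ α)) ^ 2 := by ring
        _ = c ^ 2 * ENNReal.ofReal (m ^ (2 * α)) := by
            congr 1
            rw [sq, ← ENNReal.ofReal_mul (Real.rpow_nonneg hm0.le α),
              ← Real.rpow_add hm0]
            norm_num
            ring_nf
    have hexp : ENNReal.ofReal (m ^ (2 * α * (l:ℝ))) * ENNReal.ofReal (m ^ (2 * α)) =
        ENNReal.ofReal (m ^ (2 * α * (((l:ℤ) + 1 : ℤ) : ℝ))) := by
      rw [← ENNReal.ofReal_mul (Real.rpow_nonneg hm0.le _), ← Real.rpow_add hm0]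
      congr 1
      push_cast
      ring
    calc ENNReal.ofReal (m ^ (2 * α * ((l:ℤ):ℝ))) * (‖(a ξ : ℂ) * gh ξ‖₊ : ℝ≥0∞) ^ 2
        = ENNReal.ofReal (m ^ (2 * α * (l:ℝ))) * ((ENNReal.ofReal (a ξ)) ^ 2 * (‖gh ξ‖₊ : ℝ≥0∞) ^ 2) := by
          rw [hnorm]; push_cast; ring
      _ ≤ ENNReal.ofReal (m ^ (2 * α * (l:ℝ))) * ((c ^ 2 * ENNReal.ofReal (m ^ (2 * α))) * (‖gh ξ‖₊ : ℝ≥0∞) ^ 2) := by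
          gcongr
      _ = c ^ 2 * ((ENNReal.ofReal (m ^ (2 * α * (l:ℝ))) * ENNReal.ofReal (m ^ (2 * α))) * (‖gh ξ‖₊ : ℝ≥0∞) ^ 2) := by
          ring
      _ = c ^ 2 * (ENNReal.ofReal (m ^ (2 * α * (((l:ℤ) + 1 : ℤ) : ℝ))) * (‖gh ξ‖₊ : ℝ≥0∞) ^ 2) := by
          rw [hexp]
  -- pass to square roots
  unfold sobolevNorm
  calc (sobolevNormSq μ α l (fun ξ => (a ξ : ℂ) * gh ξ)) ^ (1/2 : ℝ)
      ≤ (c ^ 2 * sobolevNormSq μ α (l + 1) gh) ^ (1/2 : ℝ) :=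
        ENNReal.rpow_le_rpow main (by norm_num)
    _ = c * (sobolevNormSq μ α (l + 1) gh) ^ (1/2 : ℝ) := by
        rw [ENNReal.mul_rpow_of_nonneg _ _ (by norm_num)]
        congr 1
        rw [← ENNReal.rpow_natCast c 2, ← ENNReal.rpow_mul]
        norm_num


end
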